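/- arXiv:2506.03331 — 3 statements merged into one kernel-verified Lean document; each statement's English description precedes it below -/
import Mathlib

section
/- For every natural number k ≥ 1 and all natural numbers n, m ≥ 0, the inequality Γ(n + k/2)·Γ(m + k/2)/Γ(n + m + k) ≤ Γ(k/2)²/Γ(k) holds. -/
open Real

lemma beta_step (x y : ℝ) (hx : 0 < x) (hy : 0 < y) :
    Real.Gamma (x + 1) * Real.Gamma y / Real.Gamma (x + 1 + y)
      ≤ Real.Gamma x * Real.Gamma y / Real.Gamma (x + y) := by
  have hxy : 0 < x + y := by linarith
  have h1 : Real.Gamma (x + 1) = x * Real.Gamma x := Real.Gamma_add_one hx.ne'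
  have h2 : Real.Gamma (x + 1 + y) = (x + y) * Real.Gamma (x + y) := by
    rw [show x + 1 + y = (x + y) + 1 by ring, Real.Gamma_add_one hxy.ne']
  have gx := Real.Gamma_pos_of_pos hx
  have gy := Real.Gamma_pos_of_pos hy
  have gxy := Real.Gamma_pos_of_pos hxy
  rw [h1, h2, div_le_div_iff₀ (by positivity) (by positivity)]
  nlinarith [mul_pos (mul_pos gx gy) gxy, mul_pos hy (mul_pos (mul_pos gx gy) gxy)]

lemma beta_nat (n : ℕ) (x y : ℝ) (hx : 0 < x) (hy : 0 < y) :
    Real.Gamma (x + n) * Real.Gamma y / Real.Gamma (x + n + y)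
      ≤ Real.Gamma x * Real.Gamma y / Real.Gamma (x + y) := by
  induction n with
  | zero => simp
  | succ n ih =>
    calc Real.Gamma (x + (n+1:ℕ)) * Real.Gamma y / Real.Gamma (x + (n+1:ℕ) + y)
        = Real.Gamma ((x + n) + 1) * Real.Gamma y / Real.Gamma ((x + n) + 1 + y) := by
          push_cast; ring_nf
      _ ≤ Real.Gamma (x + n) * Real.Gamma y / Real.Gamma (x + n + y) :=
          beta_step (x + n) y (by positivity) hy
      _ ≤ _ := ih

theorem gamma_quotient_bound (k n m : ℕ) (hk : 1 ≤ k) :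
    Real.Gamma ((n : ℝ) + (k : ℝ) / 2) * Real.Gamma ((m : ℝ) + (k : ℝ) / 2) /
      Real.Gamma ((n : ℝ) + (m : ℝ) + (k : ℝ))
      ≤ Real.Gamma ((k : ℝ) / 2) ^ 2 / Real.Gamma (k : ℝ) := by
  have ha : (0:ℝ) < (k:ℝ)/2 := by
    have : (1:ℝ) ≤ k := by exact_mod_cast hk
    linarith
  set a : ℝ := (k:ℝ)/2 with hadef
  have h1 : Real.Gamma (a + n) * Real.Gamma (a + m) / Real.Gamma (a + n + (a + m))
      ≤ Real.Gamma a * Real.Gamma (a + m) / Real.Gamma (a + (a + m)) :=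
    beta_nat n a (a + m) ha (by positivity)
  have h2 : Real.Gamma (a + m) * Real.Gamma a / Real.Gamma (a + m + a)
      ≤ Real.Gamma a * Real.Gamma a / Real.Gamma (a + a) :=
    beta_nat m a a ha ha
  have e1 : (n:ℝ) + a = a + n := by ring
  have e2 : (m:ℝ) + a = a + m := by ring
  have e3 : (n:ℝ) + m + (k:ℝ) = a + n + (a + m) := by rw [hadef]; ring
  have e4 : (k:ℝ) = a + a := by rw [hadef]; ring
  rw [e1, e2, e3, e4, sq]
  calc Real.Gamma (a + n) * Real.Gamma (a + m) / Real.Gamma (a + n + (a + m))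
      ≤ Real.Gamma a * Real.Gamma (a + m) / Real.Gamma (a + (a + m)) := h1
    _ = Real.Gamma (a + m) * Real.Gamma a / Real.Gamma (a + m + a) := by ring_nf
    _ ≤ Real.Gamma a * Real.Gamma a / Real.Gamma (a + a) := h2
end

section
/- Let p > 0 satisfy 2/p ∈ ℕ and ω ≥ 0. The double series Σ_{m₁,m₂ ≥ 0} (|x|_p/p)^ω · (2/(pΓ(1/p)))² · (−1)^{m₁+m₂}/Γ((2/p)(m₁+m₂+1)+ω) · [Γ((2m₁+1)/p)Γ((2m₂+1)/p)/((2m₁)!(2m₂)!)] · x₁^{2m₁}x₂^{2m₂} converges absolutely for every x ∈ ℝ², with the absolute value of the sum bounded by (4C(ω)|x|_p^ω)/(p^{ω+2}Γ(2/p)) · e^{|x₁|+|x₂|}, where C(ω) = 1/(ωΓ(ω)) for ω > 0 and C(0) = 1. -/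
open Real Set

/-- The `p`-norm on `ℝ²`. -/
noncomputable def pnorm (p : ℝ) (x : ℝ × ℝ) : ℝ := (|x.1| ^ p + |x.2| ^ p) ^ (1 / p)

/-- The constant `C(ω)`: `1/(ωΓ(ω))` for `ω > 0` and `1` for `ω = 0`. -/
noncomputable def Cconst (ω : ℝ) : ℝ := if ω = 0 then 1 else 1 / (ω * Real.Gamma ω)

lemma gamma_mul_le {x y c : ℝ} (hx : 0 < x) (hxy : x ≤ y) (hc : 0 ≤ c) :
    Real.Gamma (x + c) * Real.Gamma y ≤ Real.Gamma x * Real.Gamma (y + c) := by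
  rcases hc.eq_or_lt with rfl | hc
  · simp [mul_comm]
  rcases hxy.eq_or_lt with rfl | hxy
  · exact le_of_eq (mul_comm _ _)
  have hy : 0 < y := hx.trans hxy
  have hd : 0 < y + c - x := by linarith
  set t : ℝ := c / (y + c - x) with ht
  have ht0 : 0 < t := div_pos hc hd
  have ht1 : t < 1 := (div_lt_one hd).mpr (by linarith)
  have htc : t * (y + c - x) = c := div_mul_cancel₀ _ hd.ne'
  have hmem1 : x ∈ Ioi (0:ℝ) := hx
  have hmem2 : y + c ∈ Ioi (0:ℝ) := by simp only [mem_Ioi]; linarith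
  have h1 := Real.convexOn_log_Gamma.2 hmem1 hmem2 (by linarith : (0:ℝ) ≤ 1 - t)
    ht0.le (by ring)
  have h2 := Real.convexOn_log_Gamma.2 hmem1 hmem2 ht0.le (by linarith : (0:ℝ) ≤ 1 - t)
    (by ring)
  have e1 : (1 - t) • x + t • (y + c) = x + c := by
    simp only [smul_eq_mul]; nlinarith [htc]
  have e2 : t • x + (1 - t) • (y + c) = y := by
    simp only [smul_eq_mul]; nlinarith [htc]
  rw [e1] at h1
  rw [e2] at h2
  simp only [Function.comp_apply, smul_eq_mul] at h1 h2
  have hgx := Real.Gamma_pos_of_pos hx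
  have hgy := Real.Gamma_pos_of_pos hy
  have hgxc := Real.Gamma_pos_of_pos (by linarith : (0:ℝ) < x + c)
  have hgyc := Real.Gamma_pos_of_pos (by linarith : (0:ℝ) < y + c)
  have hlog : Real.log (Real.Gamma (x + c) * Real.Gamma y)
      ≤ Real.log (Real.Gamma x * Real.Gamma (y + c)) := by
    rw [Real.log_mul hgxc.ne' hgy.ne', Real.log_mul hgx.ne' hgyc.ne']
    linarith
  exact (Real.log_le_log_iff (mul_pos hgxc hgy) (mul_pos hgx hgyc)).mp hlog

lemma key_ineq {a b c ω : ℝ} (hc : 0 < c) (ha : c ≤ a) (hb : c ≤ b)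
    (hs : 1 ≤ a + b) (hω : 0 ≤ ω) :
    Real.Gamma a * Real.Gamma b * (Real.Gamma (2*c) * Real.Gamma (ω+1)) ≤
    Real.Gamma c * Real.Gamma c * Real.Gamma (a + b + ω) := by
  have hb0 : 0 < b := hc.trans_le hb
  have ha0 : 0 < a := hc.trans_le ha
  have h2c : 0 < Real.Gamma (2*c) := Real.Gamma_pos_of_pos (by linarith)
  have hω1 : 0 < Real.Gamma (ω+1) := Real.Gamma_pos_of_pos (by linarith)
  have hgc : 0 < Real.Gamma c := Real.Gamma_pos_of_pos hc
  have s1 : Real.Gamma a * Real.Gamma b ≤ Real.Gamma c * Real.Gamma (a + b - c) := by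
    have := gamma_mul_le hc hb (sub_nonneg.mpr ha)
    have e1 : c + (a - c) = a := by ring
    have e2 : b + (a - c) = a + b - c := by ring
    rw [e1, e2] at this; exact this
  have s2 : Real.Gamma (2*c) * Real.Gamma (a + b - c) ≤ Real.Gamma c * Real.Gamma (a + b) := by
    have := gamma_mul_le hc (by linarith : c ≤ a + b - c) hc.le
    have e1 : c + c = 2*c := by ring
    have e2 : a + b - c + c = a + b := by ring
    rw [e1, e2] at this; exact this
  have s3 : Real.Gamma (ω+1) * Real.Gamma (a + b) ≤ Real.Gamma (a + b + ω) := by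
    have := gamma_mul_le one_pos hs hω
    rw [Real.Gamma_one] at this
    have e1 : (1:ℝ) + ω = ω + 1 := by ring
    rw [e1] at this
    linarith
  have habc : 0 < Real.Gamma (a + b - c) := Real.Gamma_pos_of_pos (by linarith)
  have hab : 0 < Real.Gamma (a + b) := Real.Gamma_pos_of_pos (by linarith)
  calc Real.Gamma a * Real.Gamma b * (Real.Gamma (2*c) * Real.Gamma (ω+1))
      ≤ Real.Gamma c * Real.Gamma (a + b - c) * (Real.Gamma (2*c) * Real.Gamma (ω+1)) := by
        apply mul_le_mul_of_nonneg_right s1 (by positivity)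
    _ = Real.Gamma c * (Real.Gamma (2*c) * Real.Gamma (a + b - c)) * Real.Gamma (ω+1) := by ring
    _ ≤ Real.Gamma c * (Real.Gamma c * Real.Gamma (a + b)) * Real.Gamma (ω+1) := by
        apply mul_le_mul_of_nonneg_right (mul_le_mul_of_nonneg_left s2 hgc.le) hω1.le
    _ = Real.Gamma c * Real.Gamma c * (Real.Gamma (ω+1) * Real.Gamma (a + b)) := by ring
    _ ≤ Real.Gamma c * Real.Gamma c * Real.Gamma (a + b + ω) := by
        apply mul_le_mul_of_nonneg_left s3 (by positivity)

lemma abs_term {A S G u v : ℝ} (hA : 0 ≤ A) (hS : 0 < S) (hG : 0 ≤ G) (k i j : ℕ) :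
    |A * ((-1:ℝ)^k / S) * G * u^i * v^j| = A * (G / S) * |u|^i * |v|^j := by
  rw [abs_mul, abs_mul, abs_mul, abs_mul, abs_div, abs_pow, abs_neg, abs_one, one_pow,
    abs_of_nonneg hA, abs_of_nonneg hG, abs_of_pos hS, abs_pow, abs_pow]
  ring

lemma abs_tsum_le {f : ℕ × ℕ → ℝ} (h : Summable fun m => |f m|) :
    |∑' m, f m| ≤ ∑' m, |f m| := by
  simpa [Real.norm_eq_abs] using
    norm_tsum_le_tsum_norm (f := f) (by simpa [Real.norm_eq_abs] using h)

lemma div_split {A Ga Gb F1 F2 S X1 X2 : ℝ} (hF1 : F1 ≠ 0) (hF2 : F2 ≠ 0) (hS : S ≠ 0) :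
    A * (Ga * Gb / (F1 * F2) / S) * X1 * X2
      = A * (Ga * Gb / S) * (X1 / F1) * (X2 / F2) := by
  field_simp

set_option maxHeartbeats 1000000 in
theorem genBessel_series_abs_convergent (p ω : ℝ) (hp : 0 < p)
    (hq : ∃ q : ℕ, (q : ℝ) = 2 / p) (hω : 0 ≤ ω) (x : ℝ × ℝ) :
    Summable (fun m : ℕ × ℕ =>
      |(pnorm p x / p) ^ ω * (2 / (p * Real.Gamma (1 / p))) ^ 2 *
        ((-1 : ℝ) ^ (m.1 + m.2) / Real.Gamma ((2 / p) * ((m.1 : ℝ) + (m.2 : ℝ) + 1) + ω)) *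
        (Real.Gamma ((2 * (m.1 : ℝ) + 1) / p) * Real.Gamma ((2 * (m.2 : ℝ) + 1) / p) /
          ((Nat.factorial (2 * m.1) : ℝ) * (Nat.factorial (2 * m.2) : ℝ))) *
        x.1 ^ (2 * m.1) * x.2 ^ (2 * m.2)|) ∧
    |∑' m : ℕ × ℕ,
        (pnorm p x / p) ^ ω * (2 / (p * Real.Gamma (1 / p))) ^ 2 *
          ((-1 : ℝ) ^ (m.1 + m.2) / Real.Gamma ((2 / p) * ((m.1 : ℝ) + (m.2 : ℝ) + 1) + ω)) *
          (Real.Gamma ((2 * (m.1 : ℝ) + 1) / p) * Real.Gamma ((2 * (m.2 : ℝ) + 1) / p) /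
            ((Nat.factorial (2 * m.1) : ℝ) * (Nat.factorial (2 * m.2) : ℝ))) *
          x.1 ^ (2 * m.1) * x.2 ^ (2 * m.2)|
      ≤ 4 * Cconst ω * (pnorm p x) ^ ω / (p ^ (ω + 2) * Real.Gamma (2 / p)) *
          Real.exp (|x.1| + |x.2|) := by
  obtain ⟨q, hqd⟩ := hq
  have hq0 : 0 < (q : ℝ) := by rw [hqd]; positivity
  have hq1 : 1 ≤ (q : ℝ) := by
    have : q ≠ 0 := by exact_mod_cast hq0.ne'
    exact_mod_cast Nat.one_le_iff_ne_zero.mpr this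
  have hc : 0 < 1 / p := by positivity
  have hΓc : 0 < Real.Gamma (1 / p) := Real.Gamma_pos_of_pos hc
  have hΓ2c : 0 < Real.Gamma (2 / p) := Real.Gamma_pos_of_pos (by positivity)
  have hΓω1 : 0 < Real.Gamma (ω + 1) := Real.Gamma_pos_of_pos (by linarith)
  have hpn : 0 ≤ pnorm p x := by
    unfold pnorm
    positivity
  have hC : Cconst ω = 1 / Real.Gamma (ω + 1) := by
    rcases eq_or_lt_of_le hω with rfl | hω'
    · simp [Cconst, Real.Gamma_one]
    · rw [Cconst, if_neg hω'.ne', Real.Gamma_add_one hω'.ne']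
  have hCpos : 0 < Cconst ω := by rw [hC]; positivity
  set f1 : ℕ → ℝ := fun n => |x.1| ^ (2 * n) / (Nat.factorial (2 * n) : ℝ) with hf1d
  set f2 : ℕ → ℝ := fun n => |x.2| ^ (2 * n) / (Nat.factorial (2 * n) : ℝ) with hf2d
  have hf1nn : ∀ n, 0 ≤ f1 n := fun n => by rw [hf1d]; positivity
  have hf2nn : ∀ n, 0 ≤ f2 n := fun n => by rw [hf2d]; positivity
  set K : ℝ := 4 * Cconst ω * (pnorm p x) ^ ω / (p ^ (ω + 2) * Real.Gamma (2 / p)) with hKd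
  have hppow : 0 < p ^ (ω + 2) := Real.rpow_pos_of_pos hp _
  have hpnpow : 0 ≤ (pnorm p x) ^ ω := Real.rpow_nonneg hpn ω
  have hK : 0 ≤ K := by rw [hKd]; positivity
  have hArp : 0 ≤ (pnorm p x / p) ^ ω := Real.rpow_nonneg (by positivity) ω
  have hAnn : 0 ≤ (pnorm p x / p) ^ ω * (2 / (p * Real.Gamma (1 / p))) ^ 2 :=
    mul_nonneg hArp (sq_nonneg _)
  have hpne : p ≠ 0 := hp.ne'
  have hΓcne : Real.Gamma (1/p) ≠ 0 := hΓc.ne'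
  have hΓ2cne : Real.Gamma (2/p) ≠ 0 := hΓ2c.ne'
  have hΓω1ne : Real.Gamma (ω+1) ≠ 0 := hΓω1.ne'
  have hpω : (0:ℝ) < p ^ ω := Real.rpow_pos_of_pos hp ω
  have hpωne : p ^ ω ≠ 0 := hpω.ne'
  have hKeq : (pnorm p x / p) ^ ω * (2 / (p * Real.Gamma (1 / p))) ^ 2 *
      (Real.Gamma (1/p) * Real.Gamma (1/p) / (Real.Gamma (2/p) * Real.Gamma (ω+1))) = K := by
    have hp2 : p ^ (ω + 2) = p ^ ω * p ^ (2:ℕ) := by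
      rw [Real.rpow_add hp]
      congr 1
      rw [← Real.rpow_natCast p 2]
      norm_num
    rw [hKd, hC, Real.div_rpow hpn hp.le, hp2]
    field_simp
    ring
  -- per-term bound
  have hterm : ∀ m : ℕ × ℕ,
      |(pnorm p x / p) ^ ω * (2 / (p * Real.Gamma (1 / p))) ^ 2 *
        ((-1 : ℝ) ^ (m.1 + m.2) / Real.Gamma ((2 / p) * ((m.1 : ℝ) + (m.2 : ℝ) + 1) + ω)) *
        (Real.Gamma ((2 * (m.1 : ℝ) + 1) / p) * Real.Gamma ((2 * (m.2 : ℝ) + 1) / p) /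
          ((Nat.factorial (2 * m.1) : ℝ) * (Nat.factorial (2 * m.2) : ℝ))) *
        x.1 ^ (2 * m.1) * x.2 ^ (2 * m.2)| ≤ K * (f1 m.1 * f2 m.2) := by
    intro m
    have hm1 : (0:ℝ) ≤ (m.1 : ℝ) := Nat.cast_nonneg _
    have hm2 : (0:ℝ) ≤ (m.2 : ℝ) := Nat.cast_nonneg _
    have ha0 : 0 < (2 * (m.1:ℝ) + 1) / p := by positivity
    have hb0 : 0 < (2 * (m.2:ℝ) + 1) / p := by positivity
    have hΓa : 0 < Real.Gamma ((2 * (m.1:ℝ) + 1) / p) := Real.Gamma_pos_of_pos ha0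
    have hΓb : 0 < Real.Gamma ((2 * (m.2:ℝ) + 1) / p) := Real.Gamma_pos_of_pos hb0
    have hF1 : (0:ℝ) < (Nat.factorial (2 * m.1) : ℝ) := by positivity
    have hF2 : (0:ℝ) < (Nat.factorial (2 * m.2) : ℝ) := by positivity
    have hab : (2 * (m.1:ℝ) + 1) / p + (2 * (m.2:ℝ) + 1) / p
        = (2 / p) * ((m.1 : ℝ) + (m.2 : ℝ) + 1) := by
      field_simp
      ring
    have hSpos : 0 < (2 / p) * ((m.1 : ℝ) + (m.2 : ℝ) + 1) + ω := by
      have : 0 < (2 / p) * ((m.1 : ℝ) + (m.2 : ℝ) + 1) := by positivity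
      linarith
    have hΓS : 0 < Real.Gamma ((2 / p) * ((m.1 : ℝ) + (m.2 : ℝ) + 1) + ω) :=
      Real.Gamma_pos_of_pos hSpos
    have hG : 0 ≤ Real.Gamma ((2 * (m.1:ℝ) + 1) / p) * Real.Gamma ((2 * (m.2:ℝ) + 1) / p) /
        ((Nat.factorial (2 * m.1) : ℝ) * (Nat.factorial (2 * m.2) : ℝ)) :=
      div_nonneg (mul_nonneg hΓa.le hΓb.le) (mul_nonneg hF1.le hF2.le)
    have hF1ne : ((Nat.factorial (2 * m.1) : ℝ)) ≠ 0 := hF1.ne'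
    have hF2ne : ((Nat.factorial (2 * m.2) : ℝ)) ≠ 0 := hF2.ne'
    have hΓSne : Real.Gamma ((2 / p) * ((m.1 : ℝ) + (m.2 : ℝ) + 1) + ω) ≠ 0 := hΓS.ne'
    rw [abs_term hAnn hΓS hG]
    have ha : 1 / p ≤ (2 * (m.1:ℝ) + 1) / p := by
      have h := div_nonneg (by linarith : (0:ℝ) ≤ 2 * (m.1:ℝ)) hp.le
      have e : (2 * (m.1:ℝ) + 1) / p = 1 / p + 2 * (m.1:ℝ) / p := by ring
      rw [e]; linarith
    have hb : 1 / p ≤ (2 * (m.2:ℝ) + 1) / p := by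
      have h := div_nonneg (by linarith : (0:ℝ) ≤ 2 * (m.2:ℝ)) hp.le
      have e : (2 * (m.2:ℝ) + 1) / p = 1 / p + 2 * (m.2:ℝ) / p := by ring
      rw [e]; linarith
    have hs1 : 1 ≤ (2 * (m.1:ℝ) + 1) / p + (2 * (m.2:ℝ) + 1) / p := by
      rw [hab, ← hqd]
      nlinarith
    have hkey := key_ineq hc ha hb hs1 hω
    rw [show 2 * (1/p) = 2/p by ring, hab] at hkey
    have hdiv : Real.Gamma ((2 * (m.1:ℝ) + 1) / p) * Real.Gamma ((2 * (m.2:ℝ) + 1) / p) /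
        Real.Gamma ((2 / p) * ((m.1 : ℝ) + (m.2 : ℝ) + 1) + ω)
        ≤ Real.Gamma (1/p) * Real.Gamma (1/p) / (Real.Gamma (2/p) * Real.Gamma (ω+1)) :=
      (div_le_div_iff₀ hΓS (by positivity)).mpr hkey
    have e1 : (pnorm p x / p) ^ ω * (2 / (p * Real.Gamma (1 / p))) ^ 2 *
        (Real.Gamma ((2 * (m.1:ℝ) + 1) / p) * Real.Gamma ((2 * (m.2:ℝ) + 1) / p) /
          ((Nat.factorial (2 * m.1) : ℝ) * (Nat.factorial (2 * m.2) : ℝ)) /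
          Real.Gamma ((2 / p) * ((m.1 : ℝ) + (m.2 : ℝ) + 1) + ω)) *
        |x.1| ^ (2 * m.1) * |x.2| ^ (2 * m.2)
        = ((pnorm p x / p) ^ ω * (2 / (p * Real.Gamma (1 / p))) ^ 2 *
            (Real.Gamma ((2 * (m.1:ℝ) + 1) / p) * Real.Gamma ((2 * (m.2:ℝ) + 1) / p) /
              Real.Gamma ((2 / p) * ((m.1 : ℝ) + (m.2 : ℝ) + 1) + ω))) *
          (|x.1| ^ (2 * m.1) / (Nat.factorial (2 * m.1) : ℝ)) *
          (|x.2| ^ (2 * m.2) / (Nat.factorial (2 * m.2) : ℝ)) :=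
      div_split hF1ne hF2ne hΓSne
    have le1 : (pnorm p x / p) ^ ω * (2 / (p * Real.Gamma (1 / p))) ^ 2 *
        (Real.Gamma ((2 * (m.1:ℝ) + 1) / p) * Real.Gamma ((2 * (m.2:ℝ) + 1) / p) /
          Real.Gamma ((2 / p) * ((m.1 : ℝ) + (m.2 : ℝ) + 1) + ω)) ≤ K := by
      rw [← hKeq]
      exact mul_le_mul_of_nonneg_left hdiv hAnn
    have h1nn : (0:ℝ) ≤ |x.1| ^ (2 * m.1) / (Nat.factorial (2 * m.1) : ℝ) := by positivity
    have h2nn : (0:ℝ) ≤ |x.2| ^ (2 * m.2) / (Nat.factorial (2 * m.2) : ℝ) := by positivity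
    rw [e1]
    refine (mul_le_mul_of_nonneg_right (mul_le_mul_of_nonneg_right le1 h1nn) h2nn).trans_eq ?_
    simp only [hf1d, hf2d]
    ring
  -- summability
  have hinj : Function.Injective (fun n : ℕ => 2 * n) := fun a b h => by simp only at h; omega
  have hf1 : Summable f1 := by
    have := (Real.summable_pow_div_factorial |x.1|).comp_injective hinj
    exact this
  have hf2 : Summable f2 := by
    have := (Real.summable_pow_div_factorial |x.2|).comp_injective hinj
    exact this
  have hprod : Summable (fun m : ℕ × ℕ => f1 m.1 * f2 m.2) :=
    hf1.mul_of_nonneg hf2 hf1nn hf2nn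
  have hKsum : Summable (fun m : ℕ × ℕ => K * (f1 m.1 * f2 m.2)) := hprod.mul_left K
  have habsT := Summable.of_nonneg_of_le (fun m => abs_nonneg _) hterm hKsum
  refine ⟨habsT, ?_⟩
  refine le_trans ((abs_tsum_le habsT).trans (Summable.tsum_le_tsum hterm habsT hKsum)) ?_
  rw [tsum_mul_left, ← Summable.tsum_mul_tsum hf1 hf2 hprod]
  have hexp1 : ∑' n, f1 n ≤ Real.exp |x.1| := by
    have he : Real.exp |x.1| = ∑' n : ℕ, |x.1| ^ n / (Nat.factorial n : ℝ) := by
      rw [Real.exp_eq_exp_ℝ, NormedSpace.exp_eq_tsum_div]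
    rw [he]
    exact Summable.tsum_le_tsum_of_inj (fun n => 2 * n) hinj (fun c _ => by positivity)
      (fun n => le_rfl) hf1 (Real.summable_pow_div_factorial _)
  have hexp2 : ∑' n, f2 n ≤ Real.exp |x.2| := by
    have he : Real.exp |x.2| = ∑' n : ℕ, |x.2| ^ n / (Nat.factorial n : ℝ) := by
      rw [Real.exp_eq_exp_ℝ, NormedSpace.exp_eq_tsum_div]
    rw [he]
    exact Summable.tsum_le_tsum_of_inj (fun n => 2 * n) hinj (fun c _ => by positivity)
      (fun n => le_rfl) hf2 (Real.summable_pow_div_factorial _)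
  rw [Real.exp_add]
  exact mul_le_mul_of_nonneg_left
    (mul_le_mul hexp1 hexp2 (tsum_nonneg hf2nn) (Real.exp_pos _).le) hK
end

section
/- Let p > 0 with 2/p ∈ ℕ, ω ≥ 0, and φ ∈ [0,2π). The series defining 𝒥_{ω,φ}^{[p]}(r) := ((2/p)²/Γ(1/p)²)·Σ_{k=0}^∞ [p^{2k}(−1)^k/Γ((2/p)(k+1)+ω)]·(r/p)^{2k+ω}·Σ_{|m|'=k} [Γ((2m+1)/p)/(2m)!]·|cos^{m₁}φ sin^{m₂}φ|^{4/p} converges uniformly on every compact subset of ℝ_{≥0}, with |partial sums| dominated by (4C(ω)r^ω/(p^{ω+2}Γ(2/p)))·exp(r(|cos φ|^{2/p}+|sin φ|^{2/p})). -/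
open Filter

/-- The `k`-th term of the series defining `𝒥_{ω,φ}^{[p]}(r)`. -/
noncomputable def calJterm (p ω φ : ℝ) (k : ℕ) (r : ℝ) : ℝ :=
  ((2 / p) ^ 2 / Real.Gamma (1 / p) ^ 2) *
    ((p ^ (2 * k) * (-1 : ℝ) ^ k / Real.Gamma ((2 / p) * ((k : ℝ) + 1) + ω)) *
      (r / p) ^ (2 * (k : ℝ) + ω) *
      ∑ n ∈ Finset.range (k + 1),
        Real.Gamma ((2 * (n : ℝ) + 1) / p) * Real.Gamma ((2 * ((k - n : ℕ) : ℝ) + 1) / p) /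
            ((Nat.factorial (2 * n) : ℝ) * (Nat.factorial (2 * (k - n)) : ℝ)) *
          (|Real.cos φ| ^ (n : ℕ) * |Real.sin φ| ^ (k - n)) ^ (4 / p))


section CalJAux
open Real



/-- Increments of `log ∘ Γ` are monotone: Γ(u+d)Γ(x) ≤ Γ(u)Γ(x+d) for 0<u≤x, 0≤d. -/
lemma gammaRatio {u x d : ℝ} (hu : 0 < u) (hux : u ≤ x) (hd : 0 ≤ d) :
    Real.Gamma (u + d) * Real.Gamma x ≤ Real.Gamma u * Real.Gamma (x + d) := by
  rcases hd.eq_or_lt with rfl | hd'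
  · simp [mul_comm]
  rcases hux.eq_or_lt with rfl | hux'
  · rw [mul_comm]
  have hx : 0 < x := lt_of_lt_of_le hu hux
  have hden : (0:ℝ) < x - u + d := by linarith
  set t : ℝ := d / (x - u + d) with ht
  have ht0 : 0 ≤ t := by positivity
  have ht1 : t ≤ 1 := by
    rw [ht, div_le_one hden]; linarith
  have hc := Real.convexOn_log_Gamma
  have h1 : (Real.log ∘ Real.Gamma) ((1 - t) • u + t • (x + d)) ≤
      (1 - t) * (Real.log ∘ Real.Gamma) u + t * (Real.log ∘ Real.Gamma) (x + d) :=
    hc.2 (Set.mem_Ioi.2 hu) (Set.mem_Ioi.2 (by linarith)) (by linarith) ht0 (by ring)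
  have h2 : (Real.log ∘ Real.Gamma) (t • u + (1 - t) • (x + d)) ≤
      t * (Real.log ∘ Real.Gamma) u + (1 - t) * (Real.log ∘ Real.Gamma) (x + d) :=
    hc.2 (Set.mem_Ioi.2 hu) (Set.mem_Ioi.2 (by linarith)) ht0 (by linarith) (by ring)
  have e1 : (1 - t) • u + t • (x + d) = u + d := by
    simp only [smul_eq_mul, ht]; field_simp; ring
  have e2 : t • u + (1 - t) • (x + d) = x := by
    simp only [smul_eq_mul, ht]; field_simp; ring
  rw [e1] at h1; rw [e2] at h2
  have hlog : Real.log (Real.Gamma (u + d)) + Real.log (Real.Gamma x) ≤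
      Real.log (Real.Gamma u) + Real.log (Real.Gamma (x + d)) := by
    have := add_le_add h1 h2
    simp only [Function.comp_apply] at this
    linarith
  have g1 : 0 < Real.Gamma (u + d) := Real.Gamma_pos_of_pos (by linarith)
  have g2 : 0 < Real.Gamma x := Real.Gamma_pos_of_pos hx
  have g3 : 0 < Real.Gamma u := Real.Gamma_pos_of_pos hu
  have g4 : 0 < Real.Gamma (x + d) := Real.Gamma_pos_of_pos (by linarith)
  have := Real.exp_le_exp.2 hlog
  rwa [Real.exp_add, Real.exp_add, Real.exp_log g1, Real.exp_log g2, Real.exp_log g3,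
    Real.exp_log g4] at this

lemma betaMono {s x y : ℝ} (hs : 0 < s) (hx : s ≤ x) (hy : s ≤ y) :
    Real.Gamma x * Real.Gamma y * Real.Gamma (2 * s) ≤ Real.Gamma s ^ 2 * Real.Gamma (x + y) := by
  have hy0 : 0 ≤ y := le_trans hs.le hy
  have i1 : Real.Gamma (s + y) * Real.Gamma x ≤ Real.Gamma s * Real.Gamma (x + y) :=
    gammaRatio hs hx hy0
  have i3 : Real.Gamma (2 * s) * Real.Gamma y ≤ Real.Gamma s * Real.Gamma (s + y) := by
    have := gammaRatio hs hy hs.le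
    rwa [show s + s = 2 * s by ring, show y + s = s + y by ring] at this
  have gs : 0 < Real.Gamma s := Real.Gamma_pos_of_pos hs
  have gsy : 0 < Real.Gamma (s + y) := Real.Gamma_pos_of_pos (by linarith)
  have gx : 0 < Real.Gamma x := Real.Gamma_pos_of_pos (lt_of_lt_of_le hs hx)
  have gy : 0 < Real.Gamma y := Real.Gamma_pos_of_pos (lt_of_lt_of_le hs hy)
  have gxy : 0 < Real.Gamma (x + y) := Real.Gamma_pos_of_pos (by linarith)
  have g2s : 0 < Real.Gamma (2 * s) := Real.Gamma_pos_of_pos (by linarith)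
  nlinarith [mul_le_mul_of_nonneg_left i1 gs.le, mul_le_mul_of_nonneg_right i3 gx.le]

lemma evenSumExp {x : ℝ} (hx : 0 ≤ x) (N : ℕ) :
    ∑ k ∈ Finset.range N, x ^ (2 * k) / (Nat.factorial (2 * k) : ℝ) ≤ Real.exp x := by
  have h1 : ∑ k ∈ Finset.range N, x ^ (2 * k) / (Nat.factorial (2 * k) : ℝ)
      = ∑ j ∈ (Finset.range N).image (fun k => 2 * k), x ^ j / (Nat.factorial j : ℝ) := by
    rw [Finset.sum_image (by intro a _ b _ h; simp only at h; omega)]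
  rw [h1]
  calc ∑ j ∈ (Finset.range N).image (fun k => 2 * k), x ^ j / (Nat.factorial j : ℝ)
      ≤ ∑ j ∈ Finset.range (2 * N), x ^ j / (Nat.factorial j : ℝ) := by
        apply Finset.sum_le_sum_of_subset_of_nonneg
        · intro j hj
          simp only [Finset.mem_image, Finset.mem_range] at hj ⊢
          obtain ⟨a, ha, rfl⟩ := hj; omega
        · intro j _ _; positivity
    _ ≤ Real.exp x := Real.sum_le_exp_of_nonneg hx _

lemma rpowSplit {x ω : ℝ} (hx : 0 ≤ x) (hω : 0 ≤ ω) (k : ℕ) :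
    x ^ (2 * (k : ℝ) + ω) = x ^ ω * (x ^ 2) ^ k := by
  rcases hx.eq_or_lt with rfl | hx'
  · by_cases hω0 : ω = 0
    · subst hω0
      by_cases hk : k = 0
      · subst hk; norm_num
      · have h2k : (2 * (k:ℝ) + 0) ≠ 0 := by
          have : (0:ℝ) < (k:ℝ) := by exact_mod_cast Nat.pos_of_ne_zero hk
          positivity
        rw [Real.zero_rpow h2k]
        simp [zero_pow hk]
    · have hω' : 0 < ω := lt_of_le_of_ne hω (Ne.symm hω0)
      rw [Real.zero_rpow (by positivity : 2 * (k:ℝ) + ω ≠ 0), Real.zero_rpow hω0]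
      ring
  · rw [Real.rpow_add hx', mul_comm]
    congr 1
    rw [show (2 * (k : ℝ)) = ((2 * k : ℕ) : ℝ) by push_cast; ring, Real.rpow_natCast, pow_mul]

lemma powRpow {c : ℝ} (hc : 0 ≤ c) {p : ℝ} (hp : 0 < p) (n : ℕ) :
    (c ^ n) ^ (4 / p) = (c ^ (2 / p)) ^ (2 * n) := by
  rw [← Real.rpow_natCast c n, ← Real.rpow_natCast (c ^ (2 / p)) (2 * n),
    ← Real.rpow_mul hc, ← Real.rpow_mul hc]
  congr 1
  push_cast; ring

lemma binomEven {a b : ℝ} (ha : 0 ≤ a) (hb : 0 ≤ b) (k : ℕ) :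
    ∑ n ∈ Finset.range (k + 1), ((2 * k).choose (2 * n) : ℝ) * (a ^ (2 * n) * b ^ (2 * (k - n)))
      ≤ (a + b) ^ (2 * k) := by
  rw [add_pow]
  have h1 : ∑ n ∈ Finset.range (k + 1),
      ((2 * k).choose (2 * n) : ℝ) * (a ^ (2 * n) * b ^ (2 * (k - n)))
      = ∑ j ∈ (Finset.range (k + 1)).image (fun n => 2 * n),
          a ^ j * b ^ (2 * k - j) * ((2 * k).choose j : ℝ) := by
    rw [Finset.sum_image (by intro x _ y _ h; simp only at h; omega)]
    apply Finset.sum_congr rfl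
    intro n hn
    have hnk : n ≤ k := by simpa [Nat.lt_succ_iff] using hn
    have : 2 * (k - n) = 2 * k - 2 * n := by omega
    rw [this]; ring
  rw [h1]
  apply Finset.sum_le_sum_of_subset_of_nonneg
  · intro j hj
    simp only [Finset.mem_image, Finset.mem_range] at hj ⊢
    obtain ⟨n, hn, rfl⟩ := hj; omega
  · intro j _ _; positivity


lemma sumBound (p φ : ℝ) (hp : 0 < p) (k : ℕ) :
    (∑ n ∈ Finset.range (k + 1),
        Real.Gamma ((2 * (n : ℝ) + 1) / p) * Real.Gamma ((2 * ((k - n : ℕ) : ℝ) + 1) / p) /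
            ((Nat.factorial (2 * n) : ℝ) * (Nat.factorial (2 * (k - n)) : ℝ)) *
          (|Real.cos φ| ^ (n : ℕ) * |Real.sin φ| ^ (k - n)) ^ (4 / p))
      ≤ Real.Gamma (1 / p) ^ 2 / Real.Gamma (2 / p) * Real.Gamma ((2 / p) * ((k : ℝ) + 1)) *
          ((|Real.cos φ| ^ (2 / p) + |Real.sin φ| ^ (2 / p)) ^ (2 * k) /
            (Nat.factorial (2 * k) : ℝ)) := by
  set ca := |Real.cos φ| ^ (2 / p) with hca
  set sa := |Real.sin φ| ^ (2 / p) with hsa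
  have hca0 : 0 ≤ ca := Real.rpow_nonneg (abs_nonneg _) _
  have hsa0 : 0 ≤ sa := Real.rpow_nonneg (abs_nonneg _) _
  have hs : 0 < 1 / p := by positivity
  have gs : 0 < Real.Gamma (1 / p) := Real.Gamma_pos_of_pos hs
  have gq : 0 < Real.Gamma (2 / p) := Real.Gamma_pos_of_pos (by positivity)
  have g0 : 0 < Real.Gamma ((2 / p) * ((k : ℝ) + 1)) :=
    Real.Gamma_pos_of_pos (by positivity)
  set Q := Real.Gamma (1 / p) ^ 2 / Real.Gamma (2 / p) * Real.Gamma ((2 / p) * ((k : ℝ) + 1))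
    with hQ
  have hQ0 : 0 ≤ Q := by positivity
  have step1 : ∀ n ∈ Finset.range (k + 1),
      Real.Gamma ((2 * (n : ℝ) + 1) / p) * Real.Gamma ((2 * ((k - n : ℕ) : ℝ) + 1) / p) /
            ((Nat.factorial (2 * n) : ℝ) * (Nat.factorial (2 * (k - n)) : ℝ)) *
          (|Real.cos φ| ^ (n : ℕ) * |Real.sin φ| ^ (k - n)) ^ (4 / p)
        ≤ Q / (Nat.factorial (2 * k) : ℝ) *
            (((2 * k).choose (2 * n) : ℝ) * (ca ^ (2 * n) * sa ^ (2 * (k - n)))) := by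
    intro n hn
    have hnk : n ≤ k := by simpa [Nat.lt_succ_iff] using hn
    have hre : (|Real.cos φ| ^ (n : ℕ) * |Real.sin φ| ^ (k - n)) ^ (4 / p)
        = ca ^ (2 * n) * sa ^ (2 * (k - n)) := by
      rw [Real.mul_rpow (by positivity) (by positivity), powRpow (abs_nonneg _) hp,
        powRpow (abs_nonneg _) hp]
    rw [hre]
    set x := (2 * (n : ℝ) + 1) / p with hxdef
    set y := (2 * ((k - n : ℕ) : ℝ) + 1) / p with hydef
    have hx : 1 / p ≤ x := by
      rw [hxdef]
      apply div_le_div_of_nonneg_right ?_ hp.le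
      have : (0:ℝ) ≤ (n : ℝ) := Nat.cast_nonneg n
      linarith
    have hy : 1 / p ≤ y := by
      rw [hydef]
      apply div_le_div_of_nonneg_right ?_ hp.le
      have : (0:ℝ) ≤ ((k - n : ℕ) : ℝ) := Nat.cast_nonneg _
      linarith
    have hxy : x + y = (2 / p) * ((k : ℝ) + 1) := by
      rw [hxdef, hydef, Nat.cast_sub hnk]
      field_simp
      ring
    have hbeta : Real.Gamma x * Real.Gamma y
        ≤ Real.Gamma (1 / p) ^ 2 * Real.Gamma ((2 / p) * ((k : ℝ) + 1)) / Real.Gamma (2 / p) := by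
      rw [le_div_iff₀ gq]
      have := betaMono hs hx hy
      rw [show 2 * (1 / p) = 2 / p by ring, hxy] at this
      exact this
    have hgx : 0 < Real.Gamma x := Real.Gamma_pos_of_pos (lt_of_lt_of_le hs hx)
    have hgy : 0 < Real.Gamma y := Real.Gamma_pos_of_pos (lt_of_lt_of_le hs hy)
    have hD : (0:ℝ) < (Nat.factorial (2 * n) : ℝ) * (Nat.factorial (2 * (k - n)) : ℝ) := by
      positivity
    have hfact : ((2 * k).choose (2 * n) : ℝ) *
        ((Nat.factorial (2 * n) : ℝ) * (Nat.factorial (2 * (k - n)) : ℝ))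
        = (Nat.factorial (2 * k) : ℝ) := by
      have h2 : 2 * (k - n) = 2 * k - 2 * n := by omega
      rw [h2]
      exact_mod_cast (mul_assoc _ _ _).symm.trans
        (Nat.choose_mul_factorial_mul_factorial (show 2 * n ≤ 2 * k by omega))
    have hC0 : (0:ℝ) < ((2 * k).choose (2 * n) : ℝ) := by
      exact_mod_cast Nat.choose_pos (show 2 * n ≤ 2 * k by omega)
    have hE0 : 0 ≤ ca ^ (2 * n) * sa ^ (2 * (k - n)) := by positivity
    calc Real.Gamma x * Real.Gamma y /
            ((Nat.factorial (2 * n) : ℝ) * (Nat.factorial (2 * (k - n)) : ℝ)) *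
            (ca ^ (2 * n) * sa ^ (2 * (k - n)))
        ≤ Q / ((Nat.factorial (2 * n) : ℝ) * (Nat.factorial (2 * (k - n)) : ℝ)) *
            (ca ^ (2 * n) * sa ^ (2 * (k - n))) := by
          apply mul_le_mul_of_nonneg_right _ hE0
          apply div_le_div_of_nonneg_right _ hD.le
          rw [hQ, div_mul_eq_mul_div]
          exact hbeta
      _ = Q / (Nat.factorial (2 * k) : ℝ) *
            (((2 * k).choose (2 * n) : ℝ) * (ca ^ (2 * n) * sa ^ (2 * (k - n)))) := by
          rw [← hfact]
          field_simp
  calc (∑ n ∈ Finset.range (k + 1),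
        Real.Gamma ((2 * (n : ℝ) + 1) / p) * Real.Gamma ((2 * ((k - n : ℕ) : ℝ) + 1) / p) /
            ((Nat.factorial (2 * n) : ℝ) * (Nat.factorial (2 * (k - n)) : ℝ)) *
          (|Real.cos φ| ^ (n : ℕ) * |Real.sin φ| ^ (k - n)) ^ (4 / p))
      ≤ ∑ n ∈ Finset.range (k + 1), Q / (Nat.factorial (2 * k) : ℝ) *
          (((2 * k).choose (2 * n) : ℝ) * (ca ^ (2 * n) * sa ^ (2 * (k - n)))) :=
        Finset.sum_le_sum step1
    _ = Q / (Nat.factorial (2 * k) : ℝ) * ∑ n ∈ Finset.range (k + 1),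
          ((2 * k).choose (2 * n) : ℝ) * (ca ^ (2 * n) * sa ^ (2 * (k - n))) := by
        rw [Finset.mul_sum]
    _ ≤ Q / (Nat.factorial (2 * k) : ℝ) * (ca + sa) ^ (2 * k) := by
        apply mul_le_mul_of_nonneg_left (binomEven hca0 hsa0 k) (by positivity)
    _ = Q * ((ca + sa) ^ (2 * k) / (Nat.factorial (2 * k) : ℝ)) := by ring

end CalJAux

section CalJTerm
open Real

lemma termBound (p ω φ : ℝ) (hp : 0 < p) (hp1 : 1 ≤ 2 / p) (hω : 0 ≤ ω) (k : ℕ) {r : ℝ}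
    (hr : 0 ≤ r) :
    |calJterm p ω φ k r| ≤
      (2 / p) ^ 2 / (Real.Gamma (2 / p) * Real.Gamma (1 + ω)) * (r / p) ^ ω *
        ((r * (|Real.cos φ| ^ (2 / p) + |Real.sin φ| ^ (2 / p))) ^ (2 * k) /
          (Nat.factorial (2 * k) : ℝ)) := by
  set ca := |Real.cos φ| ^ (2 / p) with hca
  set sa := |Real.sin φ| ^ (2 / p) with hsa
  have hca0 : 0 ≤ ca := Real.rpow_nonneg (abs_nonneg _) _
  have hsa0 : 0 ≤ sa := Real.rpow_nonneg (abs_nonneg _) _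
  have gs : 0 < Real.Gamma (1 / p) := Real.Gamma_pos_of_pos (by positivity)
  have gq : 0 < Real.Gamma (2 / p) := Real.Gamma_pos_of_pos (by positivity)
  have g1ω : 0 < Real.Gamma (1 + ω) := Real.Gamma_pos_of_pos (by linarith)
  have hXpos : (0:ℝ) < (2 / p) * ((k : ℝ) + 1) := by positivity
  have hG1 : 0 < Real.Gamma ((2 / p) * ((k : ℝ) + 1) + ω) :=
    Real.Gamma_pos_of_pos (by linarith)
  have g0 : 0 < Real.Gamma ((2 / p) * ((k : ℝ) + 1)) := Real.Gamma_pos_of_pos hXpos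
  set S := ∑ n ∈ Finset.range (k + 1),
        Real.Gamma ((2 * (n : ℝ) + 1) / p) * Real.Gamma ((2 * ((k - n : ℕ) : ℝ) + 1) / p) /
            ((Nat.factorial (2 * n) : ℝ) * (Nat.factorial (2 * (k - n)) : ℝ)) *
          (|Real.cos φ| ^ (n : ℕ) * |Real.sin φ| ^ (k - n)) ^ (4 / p) with hS
  have hS0 : 0 ≤ S := by
    apply Finset.sum_nonneg
    intro n _
    have h1 : 0 < Real.Gamma ((2 * (n : ℝ) + 1) / p) :=
      Real.Gamma_pos_of_pos (by positivity)
    have h2 : 0 < Real.Gamma ((2 * ((k - n : ℕ) : ℝ) + 1) / p) :=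
      Real.Gamma_pos_of_pos (by positivity)
    positivity
  have hrp : (0:ℝ) ≤ r / p := by positivity
  have habs : |calJterm p ω φ k r|
      = (2 / p) ^ 2 / Real.Gamma (1 / p) ^ 2 *
          (p ^ (2 * k) / Real.Gamma ((2 / p) * ((k : ℝ) + 1) + ω) *
            ((r / p) ^ (2 * (k : ℝ) + ω)) * S) := by
    have hA : |p ^ (2 * k) * (-1 : ℝ) ^ k / Real.Gamma ((2 / p) * ((k : ℝ) + 1) + ω)|
        = p ^ (2 * k) / Real.Gamma ((2 / p) * ((k : ℝ) + 1) + ω) := by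
      rw [abs_div, abs_mul, abs_pow, abs_pow, abs_neg, abs_one, one_pow, mul_one,
        abs_of_nonneg hp.le, abs_of_nonneg hG1.le]
    rw [calJterm, abs_mul, abs_mul, abs_mul, hA, abs_of_nonneg (Real.rpow_nonneg hrp _),
      abs_of_nonneg hS0,
      abs_of_nonneg (show (0:ℝ) ≤ (2 / p) ^ 2 / Real.Gamma (1 / p) ^ 2 by positivity)]
  rw [habs, rpowSplit hrp hω k]
  have hωratio : Real.Gamma ((2 / p) * ((k : ℝ) + 1)) * Real.Gamma (1 + ω)
      ≤ Real.Gamma ((2 / p) * ((k : ℝ) + 1) + ω) := by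
    have hk1 : (1:ℝ) ≤ (k : ℝ) + 1 := by
      have : (0:ℝ) ≤ (k : ℝ) := Nat.cast_nonneg k
      linarith
    have h1X : (1:ℝ) ≤ (2 / p) * ((k : ℝ) + 1) := by
      have := mul_le_mul hp1 hk1 (by norm_num) (by positivity)
      linarith
    have := gammaRatio one_pos h1X hω
    rwa [Real.Gamma_one, one_mul, mul_comm] at this
  have hG0le : Real.Gamma ((2 / p) * ((k : ℝ) + 1))
      ≤ Real.Gamma ((2 / p) * ((k : ℝ) + 1) + ω) / Real.Gamma (1 + ω) :=
    (le_div_iff₀ g1ω).2 hωratio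
  set T := (ca + sa) ^ (2 * k) / (Nat.factorial (2 * k) : ℝ) with hT
  have hT0 : 0 ≤ T := by positivity
  have hSle : S ≤ Real.Gamma (1 / p) ^ 2 /
      (Real.Gamma (2 / p) * Real.Gamma (1 + ω)) *
        Real.Gamma ((2 / p) * ((k : ℝ) + 1) + ω) * T := by
    calc S ≤ Real.Gamma (1 / p) ^ 2 / Real.Gamma (2 / p) *
          Real.Gamma ((2 / p) * ((k : ℝ) + 1)) * T := sumBound p φ hp k
      _ ≤ Real.Gamma (1 / p) ^ 2 / Real.Gamma (2 / p) *
          (Real.Gamma ((2 / p) * ((k : ℝ) + 1) + ω) / Real.Gamma (1 + ω)) * T := by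
          gcongr
      _ = Real.Gamma (1 / p) ^ 2 / (Real.Gamma (2 / p) * Real.Gamma (1 + ω)) *
            Real.Gamma ((2 / p) * ((k : ℝ) + 1) + ω) * T := by ring
  have hpV : (p : ℝ) ^ (2 * k) * ((r / p) ^ 2) ^ k = r ^ (2 * k) := by
    rw [pow_mul p, pow_mul r, ← mul_pow]
    congr 1
    field_simp
  calc (2 / p) ^ 2 / Real.Gamma (1 / p) ^ 2 *
          (p ^ (2 * k) / Real.Gamma ((2 / p) * ((k : ℝ) + 1) + ω) *
            ((r / p) ^ ω * ((r / p) ^ 2) ^ k) * S)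
      ≤ (2 / p) ^ 2 / Real.Gamma (1 / p) ^ 2 *
          (p ^ (2 * k) / Real.Gamma ((2 / p) * ((k : ℝ) + 1) + ω) *
            ((r / p) ^ ω * ((r / p) ^ 2) ^ k) *
            (Real.Gamma (1 / p) ^ 2 / (Real.Gamma (2 / p) * Real.Gamma (1 + ω)) *
              Real.Gamma ((2 / p) * ((k : ℝ) + 1) + ω) * T)) := by
        have hmul : (0:ℝ) ≤ (2 / p) ^ 2 / Real.Gamma (1 / p) ^ 2 *
            (p ^ (2 * k) / Real.Gamma ((2 / p) * ((k : ℝ) + 1) + ω) *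
              ((r / p) ^ ω * ((r / p) ^ 2) ^ k)) := by positivity
        calc _ = (2 / p) ^ 2 / Real.Gamma (1 / p) ^ 2 *
              (p ^ (2 * k) / Real.Gamma ((2 / p) * ((k : ℝ) + 1) + ω) *
                ((r / p) ^ ω * ((r / p) ^ 2) ^ k)) * S := by ring
          _ ≤ _ := by
              rw [show (2 / p) ^ 2 / Real.Gamma (1 / p) ^ 2 *
                  (p ^ (2 * k) / Real.Gamma ((2 / p) * ((k : ℝ) + 1) + ω) *
                    ((r / p) ^ ω * ((r / p) ^ 2) ^ k) *
                    (Real.Gamma (1 / p) ^ 2 / (Real.Gamma (2 / p) * Real.Gamma (1 + ω)) *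
                      Real.Gamma ((2 / p) * ((k : ℝ) + 1) + ω) * T))
                  = (2 / p) ^ 2 / Real.Gamma (1 / p) ^ 2 *
                    (p ^ (2 * k) / Real.Gamma ((2 / p) * ((k : ℝ) + 1) + ω) *
                      ((r / p) ^ ω * ((r / p) ^ 2) ^ k)) *
                    (Real.Gamma (1 / p) ^ 2 / (Real.Gamma (2 / p) * Real.Gamma (1 + ω)) *
                      Real.Gamma ((2 / p) * ((k : ℝ) + 1) + ω) * T) by ring]
              exact mul_le_mul_of_nonneg_left hSle hmul
    _ = (2 / p) ^ 2 / (Real.Gamma (2 / p) * Real.Gamma (1 + ω)) * (r / p) ^ ω *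
          ((r * (ca + sa)) ^ (2 * k) / (Nat.factorial (2 * k) : ℝ)) := by
        rw [hT, mul_pow r (ca + sa) (2 * k), ← hpV]
        field_simp

end CalJTerm

theorem calJ_series_compact_uniform_convergence (p ω φ : ℝ) (hp : 0 < p)
    (hq : ∃ q : ℕ, (q : ℝ) = 2 / p) (hω : 0 ≤ ω) (hφ : φ ∈ Set.Ico 0 (2 * Real.pi)) :
    (∀ K ⊆ Set.Ici (0 : ℝ), IsCompact K →
      TendstoUniformlyOn (fun N r => ∑ k ∈ Finset.range N, calJterm p ω φ k r)
        (fun r => ∑' k : ℕ, calJterm p ω φ k r) atTop K) ∧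
    ∀ r : ℝ, 0 ≤ r → ∀ N : ℕ,
      |∑ k ∈ Finset.range N, calJterm p ω φ k r|
        ≤ 4 * Cconst ω * r ^ ω / (p ^ (ω + 2) * Real.Gamma (2 / p)) *
            Real.exp (r * (|Real.cos φ| ^ (2 / p) + |Real.sin φ| ^ (2 / p))) := by
  obtain ⟨qn, hqn⟩ := hq
  have hq2 : (0:ℝ) < 2 / p := by positivity
  have hp1 : (1:ℝ) ≤ 2 / p := by
    rcases Nat.eq_zero_or_pos qn with h | h
    · rw [h] at hqn; norm_num at hqn; linarith
    · calc (1:ℝ) ≤ (qn : ℝ) := by exact_mod_cast h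
        _ = 2 / p := hqn
  set ca := |Real.cos φ| ^ (2 / p) with hca
  set sa := |Real.sin φ| ^ (2 / p) with hsa
  have hca0 : 0 ≤ ca := Real.rpow_nonneg (abs_nonneg _) _
  have hsa0 : 0 ≤ sa := Real.rpow_nonneg (abs_nonneg _) _
  have gq : 0 < Real.Gamma (2 / p) := Real.Gamma_pos_of_pos (by positivity)
  have g1ω : 0 < Real.Gamma (1 + ω) := Real.Gamma_pos_of_pos (by linarith)
  have hC : Cconst ω = 1 / Real.Gamma (1 + ω) := by
    unfold Cconst
    split_ifs with h
    · subst h; norm_num [Real.Gamma_one]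
    · rw [show (1:ℝ) + ω = ω + 1 by ring, Real.Gamma_add_one h]
  have hconst : ∀ r : ℝ, 0 ≤ r →
      (2 / p) ^ 2 / (Real.Gamma (2 / p) * Real.Gamma (1 + ω)) * (r / p) ^ ω
        = 4 * Cconst ω * r ^ ω / (p ^ (ω + 2) * Real.Gamma (2 / p)) := by
    intro r hr
    rw [hC, Real.div_rpow hr hp.le, Real.rpow_add hp, Real.rpow_two]
    have hpω : (0:ℝ) < p ^ ω := Real.rpow_pos_of_pos hp ω
    field_simp
    ring
  constructor
  · intro K hK hKc
    obtain ⟨R0, hR0⟩ := hKc.isBounded.subset_closedBall 0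
    set R := max R0 0 with hRdef
    have hR : (0:ℝ) ≤ R := le_max_right _ _
    have hmem : ∀ x ∈ K, 0 ≤ x ∧ x ≤ R := by
      intro x hx
      refine ⟨hK hx, ?_⟩
      have := hR0 hx
      rw [Metric.mem_closedBall, Real.dist_eq, sub_zero] at this
      exact le_trans (le_abs_self x) (le_trans this (le_max_left _ _))
    have hRp : (0:ℝ) ≤ R / p := by positivity
    have hD0 : (0:ℝ) ≤ (2 / p) ^ 2 / (Real.Gamma (2 / p) * Real.Gamma (1 + ω)) * (R / p) ^ ω := by
      have := Real.rpow_nonneg hRp ω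
      positivity
    apply tendstoUniformlyOn_tsum_nat
      (u := fun k => (2 / p) ^ 2 / (Real.Gamma (2 / p) * Real.Gamma (1 + ω)) * (R / p) ^ ω *
        ((R * (ca + sa)) ^ (2 * k) / (Nat.factorial (2 * k) : ℝ)))
    · apply summable_of_sum_range_le (c := (2 / p) ^ 2 / (Real.Gamma (2 / p) *
        Real.Gamma (1 + ω)) * (R / p) ^ ω * Real.exp (R * (ca + sa)))
      · intro n
        have h1 : (0:ℝ) ≤ (R * (ca + sa)) ^ (2 * n) / (Nat.factorial (2 * n) : ℝ) := by
          positivity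
        exact mul_nonneg hD0 h1
      · intro n
        rw [← Finset.mul_sum]
        exact mul_le_mul_of_nonneg_left (evenSumExp (by positivity) n) hD0
    · intro k x hx
      rw [Real.norm_eq_abs]
      refine le_trans (termBound p ω φ hp hp1 hω k (hmem x hx).1) ?_
      have hx0 := (hmem x hx).1
      have hxR := (hmem x hx).2
      gcongr
  · intro r hr N
    have hD0 : (0:ℝ) ≤ (2 / p) ^ 2 / (Real.Gamma (2 / p) * Real.Gamma (1 + ω)) * (r / p) ^ ω := by
      have := Real.rpow_nonneg (show (0:ℝ) ≤ r / p by positivity) ω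
      positivity
    calc |∑ k ∈ Finset.range N, calJterm p ω φ k r|
        ≤ ∑ k ∈ Finset.range N, |calJterm p ω φ k r| := Finset.abs_sum_le_sum_abs _ _
      _ ≤ ∑ k ∈ Finset.range N,
            (2 / p) ^ 2 / (Real.Gamma (2 / p) * Real.Gamma (1 + ω)) * (r / p) ^ ω *
              ((r * (ca + sa)) ^ (2 * k) / (Nat.factorial (2 * k) : ℝ)) :=
          Finset.sum_le_sum (fun k _ => termBound p ω φ hp hp1 hω k hr)
      _ = (2 / p) ^ 2 / (Real.Gamma (2 / p) * Real.Gamma (1 + ω)) * (r / p) ^ ω *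
            ∑ k ∈ Finset.range N, (r * (ca + sa)) ^ (2 * k) / (Nat.factorial (2 * k) : ℝ) := by
          rw [Finset.mul_sum]
      _ ≤ (2 / p) ^ 2 / (Real.Gamma (2 / p) * Real.Gamma (1 + ω)) * (r / p) ^ ω *
            Real.exp (r * (ca + sa)) :=
          mul_le_mul_of_nonneg_left (evenSumExp (by positivity) N) hD0
      _ = 4 * Cconst ω * r ^ ω / (p ^ (ω + 2) * Real.Gamma (2 / p)) *
            Real.exp (r * (ca + sa)) := by rw [hconst r hr]
end
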